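/- Let i ∈ N be a buyer and ξ ∈ P^i_{w,d} an element of the clinching polytope. Let ξ̄ ∈ ℝ_{≥0}^E be the extension of ξ by zero outside E_i, let w' := w + ξ̄, and let d' ∈ ℝ_{≥0}^N be defined by d'_k := d_k for k ≠ i and d'_i := d_i − ξ(E_i). Then ξ(E_i) ≤ d_i, w' ∈ P, and for every X ⊆ N with i ∉ X it holds that f_{w',d'}(E_X) = f_{w,d}(E_X). -/

import Mathlib

open Finset

noncomputable section

namespace TwoSidedMarket

variable {B S : Type*} [Fintype B] [Fintype S] [DecidableEq B] [DecidableEq S]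

/-- A function `f` on subsets of a ground set `G` is monotone submodular:
`f ∅ = 0`, monotone on subsets of `G`, and submodular on subsets of `G`. -/
def IsMonoSubmodular {α : Type*} [DecidableEq α] (G : Finset α) (f : Finset α → ℝ) : Prop :=
  f ∅ = 0 ∧ (∀ A B : Finset α, A ⊆ B → B ⊆ G → f A ≤ f B) ∧
    ∀ A B : Finset α, A ⊆ G → B ⊆ G → f (A ∩ B) + f (A ∪ B) ≤ f A + f B

/-- Monotone submodular, without the requirement of vanishing at `∅`. -/
def IsMonoSubmodularWeak {α : Type*} [DecidableEq α] (G : Finset α) (f : Finset α → ℝ) : Prop :=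
  (∀ A B : Finset α, A ⊆ B → B ⊆ G → f A ≤ f B) ∧
    ∀ A B : Finset α, A ⊆ G → B ⊆ G → f (A ∩ B) + f (A ∪ B) ≤ f A + f B

/-- `E_i`: the edges of `E` incident to buyer `i`. -/
def Ei (E : Finset (B × S)) (i : B) : Finset (B × S) := E.filter fun e => e.1 = i

/-- `E_j`: the edges of `E` incident to seller `j`. -/
def Ej (E : Finset (B × S)) (j : S) : Finset (B × S) := E.filter fun e => e.2 = j

/-- `E_X`: the edges of `E` incident to some buyer in `X`. -/
def EX (E : Finset (B × S)) (X : Finset B) : Finset (B × S) := E.filter fun e => e.1 ∈ X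

/-- `N_F`: the buyers incident to some edge of `F`. -/
def NF (F : Finset (B × S)) : Finset B := F.image Prod.fst

/-- `x(F) = Σ_{e ∈ F} x e`. -/
def vsum (x : B × S → ℝ) (F : Finset (B × S)) : ℝ := ∑ e ∈ F, x e

/-- Membership `w ∈ P = ⊕_j P_j`: `w` is nonnegative, supported on `E`, and
`w|_{E_j} ∈ P_j` for every seller `j`. -/
def memP (E : Finset (B × S)) (fj : S → Finset (B × S) → ℝ) (w : B × S → ℝ) : Prop :=
  (∀ e, 0 ≤ w e) ∧ (∀ e ∉ E, w e = 0) ∧ ∀ j : S, ∀ F ⊆ Ej E j, vsum w F ≤ fj j F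

/-- `f(F) := Σ_{j ∈ M} f_j (E_j ∩ F)`. -/
def fTot (E : Finset (B × S)) (fj : S → Finset (B × S) → ℝ) (F : Finset (B × S)) : ℝ :=
  ∑ j : S, fj j (Ej E j ∩ F)

/-- `f_w(F) := min_{F ⊆ F' ⊆ E} (f(F') - w(F'))`. -/
def fw (E : Finset (B × S)) (fj : S → Finset (B × S) → ℝ)
    (w : B × S → ℝ) (F : Finset (B × S)) : ℝ :=
  sInf {r : ℝ | ∃ F' : Finset (B × S), F ⊆ F' ∧ F' ⊆ E ∧ r = fTot E fj F' - vsum w F'}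

/-- Membership in the remnant supply polytope `P_{w,d}`. -/
def memPwd (E : Finset (B × S)) (fj : S → Finset (B × S) → ℝ)
    (w : B × S → ℝ) (d : B → ℝ) (x : B × S → ℝ) : Prop :=
  (∀ e, 0 ≤ x e) ∧ (∀ e ∉ E, x e = 0) ∧ memP E fj (w + x) ∧
    ∀ i : B, vsum x (Ei E i) ≤ d i

/-- `f_{w,d}(F) := max_{x ∈ P_{w,d}} x(F)`. -/
def fwd (E : Finset (B × S)) (fj : S → Finset (B × S) → ℝ)
    (w : B × S → ℝ) (d : B → ℝ) (F : Finset (B × S)) : ℝ :=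
  sSup {r : ℝ | ∃ x : B × S → ℝ, memPwd E fj w d x ∧ r = vsum x F}

/-- `P^i_{w,d}(ξ)`: the remnant supply polytope of the buyers other than `i`,
given that buyer `i` receives `ξ`.  (Vectors indexed by `N - i` are encoded as
functions on all of `B` vanishing at `i`.) -/
def PiWd (E : Finset (B × S)) (fj : S → Finset (B × S) → ℝ)
    (w : B × S → ℝ) (d : B → ℝ) (i : B) (ξ : B × S → ℝ) : Set (B → ℝ) :=
  {u | u i = 0 ∧ (∀ k, 0 ≤ u k) ∧
    ∃ x : B × S → ℝ, memPwd E fj w d x ∧ (∀ e ∈ Ei E i, x e = ξ e) ∧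
      ∀ k : B, k ≠ i → vsum x (Ei E k) = u k}

/-- The clinching polytope `P^i_{w,d}` of buyer `i`:
all `ξ ∈ ℝ_{≥0}^{E_i}` with `P^i_{w,d}(ξ) = P^i_{w,d}(0)`. -/
def ClinchP (E : Finset (B × S)) (fj : S → Finset (B × S) → ℝ)
    (w : B × S → ℝ) (d : B → ℝ) (i : B) : Set (B × S → ℝ) :=
  {ξ | (∀ e, 0 ≤ ξ e) ∧ (∀ e ∉ Ei E i, ξ e = 0) ∧
    PiWd E fj w d i ξ = PiWd E fj w d i 0}


lemma vsum_add (x y : B × S → ℝ) (F : Finset (B × S)) :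
    vsum (x + y) F = vsum x F + vsum y F := by
  simp [vsum, Finset.sum_add_distrib]

lemma mem_Ei {E : Finset (B × S)} {i : B} {e : B × S} :
    e ∈ Ei E i ↔ e ∈ E ∧ e.1 = i := by simp [Ei]

lemma vsum_EX (x : B × S → ℝ) (E : Finset (B × S)) (X : Finset B) :
    vsum x (EX E X) = ∑ k ∈ X, vsum x (Ei E k) := by
  unfold vsum
  rw [show EX E X = X.biUnion (fun k => Ei E k) by
    ext e
    simp only [EX, Ei, Finset.mem_filter, Finset.mem_biUnion]
    constructor
    · rintro ⟨he, hx⟩; exact ⟨e.1, hx, he, rfl⟩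
    · rintro ⟨k, hk, he, rfl⟩; exact ⟨he, hk⟩]
  exact Finset.sum_biUnion (by
    intro a _ b _ hab
    simp only [Finset.disjoint_left]
    intro e he he'
    exact hab ((mem_Ei.1 he).2.symm.trans (mem_Ei.1 he').2))

/-- `ξ` vanishes on `Ei E k` for `k ≠ i`, if supported on `Ei E i`. -/
lemma vsum_eq_on_compl {ξ : B × S → ℝ} {E : Finset (B × S)} {i : B}
    (hsupp : ∀ e ∉ Ei E i, ξ e = 0) {F : Finset (B × S)}
    (hF : ∀ e ∈ F, e.1 ≠ i) : vsum ξ F = 0 := by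
  unfold vsum
  refine Finset.sum_eq_zero fun e he => hsupp e fun hmem => hF e he (mem_Ei.1 hmem).2

/-- after buyer `i` clinches `ξ ∈ P^i_{w,d}`, the updated transaction
`w' = w + ξ̄` is feasible, `ξ(E_i) ≤ d_i`, and `f_{w',d'}(E_X) = f_{w,d}(E_X)` for
every `X ⊆ N` with `i ∉ X`, where `d'` agrees with `d` off `i` and
`d'_i = d_i - ξ(E_i)`. -/
theorem clinch_update_invariance
    (E : Finset (B × S)) (fj : S → Finset (B × S) → ℝ)
    (hfj : ∀ j : S, IsMonoSubmodular (Ej E j) (fj j))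
    (w : B × S → ℝ) (hw : memP E fj w)
    (d : B → ℝ) (hd : ∀ i : B, 0 ≤ d i)
    (i : B) (ξ : B × S → ℝ) (hmem : ξ ∈ ClinchP E fj w d i) :
    vsum ξ (Ei E i) ≤ d i ∧
    memP E fj (w + ξ) ∧
    ∀ X : Finset B, i ∉ X →
      fwd E fj (w + ξ) (Function.update d i (d i - vsum ξ (Ei E i))) (EX E X)
        = fwd E fj w d (EX E X) := by
  obtain ⟨hξ0, hξsupp, hPi⟩ := hmem
  -- Step 1: `0 ∈ PiWd E fj w d i 0`
  have hzero : (0 : B → ℝ) ∈ PiWd E fj w d i 0 := by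
    refine ⟨rfl, fun k => le_refl 0, 0, ⟨fun e => le_refl 0, fun e _ => rfl, ?_, fun k => ?_⟩,
      fun e _ => rfl, fun k _ => by simp [vsum]⟩
    · simpa using hw
    · simpa [vsum] using hd k
  have hzero' : (0 : B → ℝ) ∈ PiWd E fj w d i ξ := hPi.symm ▸ hzero
  obtain ⟨-, -, x₀, hx₀, hx₀e, hx₀k⟩ := hzero'
  -- Step 2: `x₀ = ξ`, hence `ξ ∈ P_{w,d}`
  have hx₀ξ : x₀ = ξ := by
    funext e
    by_cases hei : e ∈ Ei E i
    · exact hx₀e e hei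
    · rw [hξsupp e hei]
      by_cases hE : e ∈ E
      · have h1 : e.1 ≠ i := fun h => hei (mem_Ei.2 ⟨hE, h⟩)
        have hsum : ∑ f ∈ Ei E e.1, x₀ f = 0 := by
          simpa [vsum] using hx₀k e.1 h1
        exact (Finset.sum_eq_zero_iff_of_nonneg (fun f _ => hx₀.1 f)).1 hsum e
          (mem_Ei.2 ⟨hE, rfl⟩)
      · exact hx₀.2.1 e hE
  have hmemξ : memPwd E fj w d ξ := hx₀ξ ▸ hx₀
  refine ⟨hmemξ.2.2.2 i, hmemξ.2.2.1, fun X hX => ?_⟩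
  set dξ : ℝ := vsum ξ (Ei E i) with hdξ
  set d' : B → ℝ := Function.update d i (d i - dξ) with hd'
  have hξEX : ∀ F : Finset (B × S), (∀ e ∈ F, e.1 ≠ i) → vsum ξ F = 0 :=
    fun F hF => vsum_eq_on_compl hξsupp hF
  have hEXne : ∀ e ∈ EX E X, e.1 ≠ i := by
    intro e he h
    have : e.1 ∈ X := (Finset.mem_filter.1 he).2
    exact hX (h ▸ this)
  have hEkne : ∀ k : B, k ≠ i → ∀ e ∈ Ei E k, e.1 ≠ i :=
    fun k hk e he => by rw [(mem_Ei.1 he).2]; exact hk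
  have hset : {r : ℝ | ∃ x : B × S → ℝ, memPwd E fj (w + ξ) d' x ∧ r = vsum x (EX E X)} =
      {r : ℝ | ∃ x : B × S → ℝ, memPwd E fj w d x ∧ r = vsum x (EX E X)} := by
    ext r
    constructor
    · rintro ⟨x, ⟨hx0, hxsupp, hxP, hxd⟩, rfl⟩
      refine ⟨x + ξ, ⟨fun e => add_nonneg (hx0 e) (hξ0 e), fun e he => ?_, ?_, fun k => ?_⟩, ?_⟩
      · have : ξ e = 0 := hξsupp e fun h => he (mem_Ei.1 h).1
        simp [hxsupp e he, this]
      · have hre : w + (x + ξ) = w + ξ + x := by rw [← add_assoc, add_right_comm]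
        rw [hre]; exact hxP
      · rw [vsum_add]
        by_cases hk : k = i
        · subst hk
          have h1 : vsum x (Ei E k) ≤ d k - dξ := by
            simpa [hd', Function.update_self] using hxd k
          linarith
        · have h1 : vsum ξ (Ei E k) = 0 := hξEX _ (hEkne k hk)
          have h2 : vsum x (Ei E k) ≤ d k := by
            simpa [hd', Function.update_of_ne hk] using hxd k
          linarith
      · rw [vsum_add, hξEX _ hEXne, add_zero]
    · rintro ⟨x, ⟨hx0, hxsupp, hxP, hxd⟩, rfl⟩
      -- The zeroed-out-on-`E_i` version of `x` gives an element `u ∈ PiWd … 0`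
      set x'' : B × S → ℝ := fun e => if e ∈ Ei E i then 0 else x e with hx''
      set u : B → ℝ := fun k => if k = i then 0 else vsum x (Ei E k) with hu
      have hx''le : ∀ e, x'' e ≤ x e := by
        intro e; simp only [hx'']; split <;> [exact hx0 e; exact le_refl _]
      have hx''0 : ∀ e, 0 ≤ x'' e := by
        intro e; simp only [hx'']; split <;> [exact le_refl 0; exact hx0 e]
      have hx''eq : ∀ k : B, k ≠ i → vsum x'' (Ei E k) = vsum x (Ei E k) := by
        intro k hk
        refine Finset.sum_congr rfl fun e he => ?_
        simp only [hx'']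
        rw [if_neg fun h => hEkne k hk e he (mem_Ei.1 h).2]
      have humem : u ∈ PiWd E fj w d i 0 := by
        refine ⟨if_pos rfl, fun k => ?_, x'', ⟨hx''0, fun e he => ?_, ⟨?_, ?_, ?_⟩, fun k => ?_⟩,
          fun e he => by simp [hx'', if_pos he], fun k hk => ?_⟩
        · simp only [hu]; split
          · exact le_refl 0
          · exact Finset.sum_nonneg fun e _ => hx0 e
        · simp [hx'', hxsupp e he]
        · exact fun e => add_nonneg (hw.1 e) (hx''0 e)
        · intro e he
          simp [hx'', hw.2.1 e he, hxsupp e he]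
        · intro j F hF
          calc vsum (w + x'') F ≤ vsum (w + x) F := by
                exact Finset.sum_le_sum fun e _ => add_le_add_right (hx''le e) _
            _ ≤ fj j F := hxP.2.2 j F hF
        · calc vsum x'' (Ei E k) ≤ vsum x (Ei E k) :=
                Finset.sum_le_sum fun e _ => hx''le e
            _ ≤ d k := hxd k
        · rw [hx''eq k hk, hu]; simp [hk]
      have humem' : u ∈ PiWd E fj w d i ξ := hPi.symm ▸ humem
      obtain ⟨-, -, y, hy, hyξ, hyk⟩ := humem'
      set z : B × S → ℝ := fun e => if e ∈ Ei E i then 0 else y e with hz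
      have hkey : w + ξ + z = w + y := by
        funext e
        by_cases he : e ∈ Ei E i
        · simp [hz, if_pos he, hyξ e he]
        · simp [hz, if_neg he, hξsupp e he]
      have hyi : vsum y (Ei E i) = dξ :=
        Finset.sum_congr rfl fun e he => hyξ e he
      have hzeq : ∀ k : B, k ≠ i → vsum z (Ei E k) = vsum y (Ei E k) := by
        intro k hk
        refine Finset.sum_congr rfl fun e he => ?_
        simp only [hz]
        rw [if_neg fun h => hEkne k hk e he (mem_Ei.1 h).2]
      have hzx : ∀ k : B, k ≠ i → vsum z (Ei E k) = vsum x (Ei E k) := by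
        intro k hk
        rw [hzeq k hk, hyk k hk, hu]; simp [hk]
      refine ⟨z, ⟨fun e => ?_, fun e he => ?_, ?_, fun k => ?_⟩, ?_⟩
      · simp only [hz]; split <;> [exact le_refl 0; exact hy.1 e]
      · simp [hz, hy.2.1 e he]
      · rw [hkey]; exact hy.2.2.1
      · by_cases hk : k = i
        · subst hk
          have h1 : vsum z (Ei E k) = 0 :=
            Finset.sum_eq_zero fun e he => by simp [hz, if_pos he]
          have h2 : dξ ≤ d k := hyi ▸ hy.2.2.2 k
          rw [h1, hd', Function.update_self]
          linarith
        · rw [hzx k hk, hd', Function.update_of_ne hk]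
          exact hxd k
      · rw [vsum_EX, vsum_EX]
        exact (Finset.sum_congr rfl fun k hk =>
          hzx k fun h => hX (h ▸ hk)).symm
  unfold fwd
  rw [hset]


end TwoSidedMarket
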